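/- arXiv:1301.3473 — 4 statements merged into one kernel-verified Lean document; each statement's English description precedes it below -/
import Mathlib

section
/- With Y = (1−Z)ε* + Z(α₀ + β₀X + ε), assuming additionally that ε* and ε have zero third moments and finite third moments and X has finite third moment, E(Y³ | X) = π₀α₀(α₀² + 3σ₀²) + 3π₀β₀(α₀² + σ₀²)X + 3π₀α₀β₀²X² + π₀β₀³X³ almost surely, where σ₀² = E(ε²). -/
open MeasureTheory ProbabilityTheory
open scoped ENNReal

section Aux

variable {Ω : Type*} [MeasurableSpace Ω] {μ : Measure Ω}

private lemma aux_ennA : (1:ℝ≥0∞)/(3/2) = 1/3 + 1/3 := by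
  rw [ENNReal.div_add_div_same, one_div, ENNReal.inv_div (by norm_num) (by norm_num)]; norm_num

private lemma aux_ennB : (1:ℝ≥0∞)/1 = 1/(3/2) + 1/3 := by
  rw [one_div (3/2 : ℝ≥0∞), ENNReal.inv_div (by norm_num) (by norm_num),
    ENNReal.div_add_div_same]
  norm_num
  rw [ENNReal.div_self] <;> norm_num

/-- Product of three `L³` functions is integrable. -/
private lemma aux_integrable_mul3 {f g h : Ω → ℝ} (hf : MemLp f 3 μ) (hg : MemLp g 3 μ)
    (hh : MemLp h 3 μ) : Integrable (fun ω => f ω * g ω * h ω) μ := by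
  have h2 : MemLp (f • g) (3/2) μ := by
    haveI : ENNReal.HolderTriple 3 3 (3/2) := ⟨by simpa only [one_div] using aux_ennA.symm⟩
    exact MemLp.smul hg hf
  have h3 : MemLp ((f • g) • h) 1 μ := by
    haveI : ENNReal.HolderTriple (3/2) 3 1 := ⟨by simpa only [one_div] using aux_ennB.symm⟩
    exact MemLp.smul hh h2
  exact memLp_one_iff_integrable.mp h3

private lemma aux_cube_integrable {f : Ω → ℝ} (hf : MemLp f 3 μ) :
    Integrable (fun ω => f ω ^ 3) μ := by
  have := aux_integrable_mul3 hf hf hf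
  have heq : (fun ω => f ω * f ω * f ω) = fun ω => f ω ^ 3 := by funext ω; ring
  exact heq ▸ this

/-- If `Z ⟂ (X, W)` and `X ⟂ W`, then `(Z, W) ⟂ X`. -/
private lemma aux_pair_indep [IsProbabilityMeasure μ] {Z W X : Ω → ℝ}
    (hZ : Measurable Z) (hW : Measurable W) (hX : Measurable X)
    (h1 : IndepFun Z (fun ω => (X ω, W ω)) μ) (h2 : IndepFun X W μ) :
    IndepFun (fun ω => (Z ω, W ω)) X μ := by
  have hZW : IndepFun Z W μ := h1.comp measurable_id measurable_snd
  haveI : IsProbabilityMeasure (μ.map Z) := Measure.isProbabilityMeasure_map hZ.aemeasurable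
  haveI : IsProbabilityMeasure (μ.map W) := Measure.isProbabilityMeasure_map hW.aemeasurable
  haveI : IsProbabilityMeasure (μ.map X) := Measure.isProbabilityMeasure_map hX.aemeasurable
  rw [indepFun_iff_map_prod_eq_prod_map_map ((hZ.prodMk hW).aemeasurable) hX.aemeasurable]
  have e1 : μ.map (fun ω => (Z ω, (X ω, W ω))) = (μ.map Z).prod (μ.map (fun ω => (X ω, W ω))) :=
    (indepFun_iff_map_prod_eq_prod_map_map hZ.aemeasurable (hX.prodMk hW).aemeasurable).1 h1
  have e2 : μ.map (fun ω => (X ω, W ω)) = (μ.map X).prod (μ.map W) :=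
    (indepFun_iff_map_prod_eq_prod_map_map hX.aemeasurable hW.aemeasurable).1 h2
  have e3 : μ.map (fun ω => (Z ω, W ω)) = (μ.map Z).prod (μ.map W) :=
    (indepFun_iff_map_prod_eq_prod_map_map hZ.aemeasurable hW.aemeasurable).1 hZW
  have hτm : Measurable (fun p : ℝ × ℝ × ℝ => ((p.1, p.2.2), p.2.1)) := by fun_prop
  have hmap : μ.map (fun ω => ((Z ω, W ω), X ω))
      = (μ.map (fun ω => (Z ω, (X ω, W ω)))).map (fun p : ℝ × ℝ × ℝ => ((p.1, p.2.2), p.2.1)) := by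
    rw [Measure.map_map hτm (hZ.prodMk (hX.prodMk hW))]
    rfl
  rw [hmap, e1, e2, e3]
  have s1 : MeasurePreserving (Prod.map (id : ℝ → ℝ) (Prod.swap : ℝ × ℝ → ℝ × ℝ))
      ((μ.map Z).prod ((μ.map X).prod (μ.map W)))
      ((μ.map Z).prod ((μ.map W).prod (μ.map X))) :=
    (MeasurePreserving.id _).prod Measure.measurePreserving_swap
  have s2 : MeasurePreserving
      ((MeasurableEquiv.prodAssoc : (ℝ × ℝ) × ℝ ≃ᵐ ℝ × ℝ × ℝ).symm)
      ((μ.map Z).prod ((μ.map W).prod (μ.map X)))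
      (((μ.map Z).prod (μ.map W)).prod (μ.map X)) :=
    MeasurePreserving.symm _ (measurePreserving_prodAssoc _ _ _)
  have hcomp : (fun p : ℝ × ℝ × ℝ => ((p.1, p.2.2), p.2.1))
      = ((MeasurableEquiv.prodAssoc : (ℝ × ℝ) × ℝ ≃ᵐ ℝ × ℝ × ℝ).symm)
        ∘ (Prod.map (id : ℝ → ℝ) (Prod.swap : ℝ × ℝ → ℝ × ℝ)) := by
    funext p; rfl
  rw [hcomp]
  exact (s2.comp s1).map_eq

/-- Conditional expectation of `g(X) * U` given `X` when `U ⟂ X`. -/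
private lemma aux_condexp_mul [IsProbabilityMeasure μ] {X U : Ω → ℝ}
    (hX : Measurable X) (hU : Measurable U) (hind : IndepFun U X μ) {g : ℝ → ℝ}
    (hg : Measurable g) (hint : Integrable (fun ω => g (X ω) * U ω) μ)
    (hUint : Integrable U μ) :
    μ[fun ω => g (X ω) * U ω | MeasurableSpace.comap X inferInstance]
      =ᵐ[μ] fun ω => g (X ω) * ∫ x, U x ∂μ := by
  set m := MeasurableSpace.comap X inferInstance with hm_def
  have hm : m ≤ _ := hX.comap_le
  haveI : SigmaFinite (μ.trim hm) := inferInstance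
  have hgX : StronglyMeasurable[m] (fun ω => g (X ω)) :=
    (hg.comp (measurable_iff_comap_le.mpr le_rfl)).stronglyMeasurable
  have h1 : μ[(fun ω => g (X ω)) * U | m] =ᵐ[μ] (fun ω => g (X ω)) * μ[U | m] :=
    condExp_mul_of_stronglyMeasurable_left hgX hint hUint
  have hUsm : StronglyMeasurable[MeasurableSpace.comap U inferInstance] U :=
    (measurable_iff_comap_le.mpr le_rfl).stronglyMeasurable
  have h2 : μ[U | m] =ᵐ[μ] fun _ => ∫ x, U x ∂μ :=
    condExp_indep_eq hU.comap_le hm hUsm hind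
  refine h1.trans ?_
  filter_upwards [h2] with ω hω
  simp only [Pi.mul_apply, hω]

end Aux

/-- Third conditional moment in the two-component mixture of regressions model:
assuming zero third moments for the errors and a finite third moment for `X`,
`E(Y³ | X) = π₀α₀(α₀² + 3σ₀²) + 3π₀β₀(α₀² + σ₀²)X + 3π₀α₀β₀²X² + π₀β₀³X³` a.s.,
where `σ₀² = E(ε²)`. -/
theorem condexp_cube_mixture_eq
    {Ω : Type*} [MeasurableSpace Ω] (μ : Measure Ω) [IsProbabilityMeasure μ]
    (X Z εstar ε Y : Ω → ℝ) (π₀ α₀ β₀ : ℝ)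
    (hX : Measurable X) (hZ : Measurable Z) (hεstar : Measurable εstar) (hε : Measurable ε)
    (hπ₀ : π₀ ∈ Set.Icc (0 : ℝ) 1)
    (hZ01 : ∀ ω, Z ω = 0 ∨ Z ω = 1)
    (hZmean : ∫ ω, Z ω ∂μ = π₀)
    (hXL3 : MemLp X 3 μ)
    (hεstarL3 : MemLp εstar 3 μ) (hεL3 : MemLp ε 3 μ)
    (hεstar0 : ∫ ω, εstar ω ∂μ = 0) (hε0 : ∫ ω, ε ω ∂μ = 0)
    (hεstar3 : ∫ ω, (εstar ω) ^ 3 ∂μ = 0) (hε3 : ∫ ω, (ε ω) ^ 3 ∂μ = 0)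
    (hindZ : IndepFun Z (fun ω => (X ω, εstar ω, ε ω)) μ)
    (hindXεstar : IndepFun X εstar μ) (hindXε : IndepFun X ε μ)
    (hY : ∀ ω, Y ω = (1 - Z ω) * εstar ω + Z ω * (α₀ + β₀ * X ω + ε ω)) :
    μ[fun ω => (Y ω) ^ 3 | MeasurableSpace.comap X inferInstance]
      =ᵐ[μ] fun ω =>
        π₀ * α₀ * (α₀ ^ 2 + 3 * ∫ ω', (ε ω') ^ 2 ∂μ)
          + 3 * π₀ * β₀ * (α₀ ^ 2 + ∫ ω', (ε ω') ^ 2 ∂μ) * X ω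
          + 3 * π₀ * α₀ * β₀ ^ 2 * (X ω) ^ 2
          + π₀ * β₀ ^ 3 * (X ω) ^ 3 := by
  -- L³ membership of the affine function of X
  have hL : MemLp (fun ω => α₀ + β₀ * X ω) 3 μ := (memLp_const α₀).add (hXL3.const_mul β₀)
  have hLm : Measurable (fun ω => α₀ + β₀ * X ω) := measurable_const.add (measurable_const.mul hX)
  -- bounds on Z
  have hZbd : ∀ ω, ‖Z ω‖ ≤ 1 := by
    intro ω; rcases hZ01 ω with h | h <;> simp [h]
  have hZbd' : ∀ ω, ‖1 - Z ω‖ ≤ 1 := by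
    intro ω; rcases hZ01 ω with h | h <;> simp [h]
  -- independence facts derived from hindZ
  have hZX : IndepFun Z X μ := hindZ.comp measurable_id measurable_fst
  have hZεstar : IndepFun Z εstar μ :=
    hindZ.comp measurable_id (measurable_fst.comp measurable_snd)
  have hZε : IndepFun Z ε μ :=
    hindZ.comp measurable_id (measurable_snd.comp measurable_snd)
  have hZpairεstar : IndepFun Z (fun ω => (X ω, εstar ω)) μ :=
    hindZ.comp measurable_id (measurable_fst.prodMk (measurable_fst.comp measurable_snd))
  have hZpairε : IndepFun Z (fun ω => (X ω, ε ω)) μ :=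
    hindZ.comp measurable_id (measurable_fst.prodMk (measurable_snd.comp measurable_snd))
  have hPairεstar : IndepFun (fun ω => (Z ω, εstar ω)) X μ :=
    aux_pair_indep hZ hεstar hX hZpairεstar hindXεstar
  have hPairε : IndepFun (fun ω => (Z ω, ε ω)) X μ :=
    aux_pair_indep hZ hε hX hZpairε hindXε
  -- the five summands
  set F1 : Ω → ℝ := fun ω => (1 : ℝ) * ((1 - Z ω) * εstar ω ^ 3) with hF1
  set F2 : Ω → ℝ := fun ω => (α₀ + β₀ * X ω) ^ 3 * Z ω with hF2
  set F3 : Ω → ℝ := fun ω => (3 * (α₀ + β₀ * X ω) ^ 2) * (Z ω * ε ω) with hF3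
  set F4 : Ω → ℝ := fun ω => (3 * (α₀ + β₀ * X ω)) * (Z ω * ε ω ^ 2) with hF4
  set F5 : Ω → ℝ := fun ω => (1 : ℝ) * (Z ω * ε ω ^ 3) with hF5
  have hdecomp : (fun ω => (Y ω) ^ 3) = F1 + F2 + F3 + F4 + F5 := by
    funext ω
    simp only [Pi.add_apply, hF1, hF2, hF3, hF4, hF5]
    rcases hZ01 ω with h | h <;> rw [hY ω, h] <;> ring
  -- integrability of the summands
  have hi1 : Integrable F1 μ := by
    have hb := Integrable.bdd_mul (aux_cube_integrable hεstarL3)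
      ((measurable_const.sub hZ).aestronglyMeasurable) (Filter.Eventually.of_forall hZbd')
    have heq : (fun ω => (1 - Z ω) * εstar ω ^ 3) = F1 := by funext ω; simp [hF1]
    exact heq ▸ hb
  have hi2 : Integrable F2 μ := by
    have hb := Integrable.bdd_mul (aux_cube_integrable hL) hZ.aestronglyMeasurable (Filter.Eventually.of_forall hZbd)
    have heq : (fun ω => Z ω * (α₀ + β₀ * X ω) ^ 3) = F2 := by funext ω; simp [hF2]; ring
    exact heq ▸ hb
  have hi3 : Integrable F3 μ := by
    have hb0 : Integrable (fun ω => (α₀ + β₀ * X ω) * (α₀ + β₀ * X ω) * ε ω) μ :=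
      aux_integrable_mul3 hL hL hεL3
    have hb := Integrable.bdd_mul (hb0.const_mul 3) hZ.aestronglyMeasurable (Filter.Eventually.of_forall hZbd)
    have heq : (fun ω => Z ω * (3 * ((α₀ + β₀ * X ω) * (α₀ + β₀ * X ω) * ε ω))) = F3 := by
      funext ω; simp only [hF3]; ring
    exact heq ▸ hb
  have hi4 : Integrable F4 μ := by
    have hb0 : Integrable (fun ω => (α₀ + β₀ * X ω) * ε ω * ε ω) μ :=
      aux_integrable_mul3 hL hεL3 hεL3
    have hb := Integrable.bdd_mul (hb0.const_mul 3) hZ.aestronglyMeasurable (Filter.Eventually.of_forall hZbd)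
    have heq : (fun ω => Z ω * (3 * ((α₀ + β₀ * X ω) * ε ω * ε ω))) = F4 := by
      funext ω; simp only [hF4]; ring
    exact heq ▸ hb
  have hi5 : Integrable F5 μ := by
    have hb := Integrable.bdd_mul (aux_cube_integrable hεL3) hZ.aestronglyMeasurable (Filter.Eventually.of_forall hZbd)
    have heq : (fun ω => Z ω * ε ω ^ 3) = F5 := by funext ω; simp [hF5]
    exact heq ▸ hb
  -- integrals of the independent factors
  have hI1 : ∫ ω, (1 - Z ω) * εstar ω ^ 3 ∂μ = 0 := by
    have hind' : IndepFun (fun ω => 1 - Z ω) (fun ω => εstar ω ^ 3) μ :=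
      hZεstar.comp (measurable_const.sub measurable_id) (measurable_id.pow_const 3)
    have hpi : (fun ω => (1 - Z ω) * εstar ω ^ 3)
        = (fun ω => 1 - Z ω) * (fun ω => εstar ω ^ 3) := rfl
    rw [hpi, hind'.integral_mul_eq_mul_integral ((measurable_const.sub hZ).aestronglyMeasurable)
      ((hεstar.pow_const 3).aestronglyMeasurable), hεstar3, mul_zero]
  have hI3 : ∫ ω, Z ω * ε ω ∂μ = 0 := by
    have hpi : (fun ω => Z ω * ε ω) = Z * ε := rfl
    rw [hpi, hZε.integral_mul_eq_mul_integral hZ.aestronglyMeasurable hε.aestronglyMeasurable, hε0, mul_zero]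
  have hI4 : ∫ ω, Z ω * ε ω ^ 2 ∂μ = π₀ * ∫ ω', (ε ω') ^ 2 ∂μ := by
    have hind' : IndepFun Z (fun ω => ε ω ^ 2) μ :=
      hZε.comp measurable_id (measurable_id.pow_const 2)
    have hpi : (fun ω => Z ω * ε ω ^ 2) = Z * (fun ω => ε ω ^ 2) := rfl
    rw [hpi, hind'.integral_mul_eq_mul_integral hZ.aestronglyMeasurable
      ((hε.pow_const 2).aestronglyMeasurable), hZmean]
  have hI5 : ∫ ω, Z ω * ε ω ^ 3 ∂μ = 0 := by
    have hind' : IndepFun Z (fun ω => ε ω ^ 3) μ :=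
      hZε.comp measurable_id (measurable_id.pow_const 3)
    have hpi : (fun ω => Z ω * ε ω ^ 3) = Z * (fun ω => ε ω ^ 3) := rfl
    rw [hpi, hind'.integral_mul_eq_mul_integral hZ.aestronglyMeasurable
      ((hε.pow_const 3).aestronglyMeasurable), hε3, mul_zero]
  -- conditional expectations of the summands
  have h1 : μ[F1 | MeasurableSpace.comap X inferInstance] =ᵐ[μ] fun ω => (1 : ℝ) * ∫ x, (1 - Z x) * εstar x ^ 3 ∂μ := by
    have hind' : IndepFun (fun ω => (1 - Z ω) * εstar ω ^ 3) X μ :=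
      hPairεstar.comp (measurable_fst.const_sub 1 |>.mul (measurable_snd.pow_const 3))
        measurable_id
    exact aux_condexp_mul hX ((measurable_const.sub hZ).mul (hεstar.pow_const 3)) hind'
      measurable_const hi1 (by
        exact Integrable.bdd_mul (aux_cube_integrable hεstarL3)
          ((measurable_const.sub hZ).aestronglyMeasurable) (Filter.Eventually.of_forall hZbd'))
  have h2 : μ[F2 | MeasurableSpace.comap X inferInstance] =ᵐ[μ] fun ω => (α₀ + β₀ * X ω) ^ 3 * ∫ x, Z x ∂μ := by
    have hZint : Integrable Z μ := by
      refine ⟨hZ.aestronglyMeasurable, ?_⟩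
      exact (hasFiniteIntegral_const (1 : ℝ)).mono' (Filter.Eventually.of_forall hZbd)
    exact aux_condexp_mul hX hZ hZX (g := fun x => (α₀ + β₀ * x) ^ 3) (by fun_prop) hi2 hZint
  have h3 : μ[F3 | MeasurableSpace.comap X inferInstance] =ᵐ[μ] fun ω => (3 * (α₀ + β₀ * X ω) ^ 2) * ∫ x, Z x * ε x ∂μ := by
    have hind' : IndepFun (fun ω => Z ω * ε ω) X μ :=
      hPairε.comp (measurable_fst.mul measurable_snd) measurable_id
    have hUint : Integrable (fun ω => Z ω * ε ω) μ :=
      Integrable.bdd_mul (memLp_one_iff_integrable.mp (hεL3.mono_exponent (by norm_num)))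
        hZ.aestronglyMeasurable (Filter.Eventually.of_forall hZbd)
    exact aux_condexp_mul hX (hZ.mul hε) hind'
      (g := fun x => 3 * (α₀ + β₀ * x) ^ 2) (by fun_prop) hi3 hUint
  have h4 : μ[F4 | MeasurableSpace.comap X inferInstance] =ᵐ[μ] fun ω => (3 * (α₀ + β₀ * X ω)) * ∫ x, Z x * ε x ^ 2 ∂μ := by
    have hind' : IndepFun (fun ω => Z ω * ε ω ^ 2) X μ :=
      hPairε.comp (measurable_fst.mul (measurable_snd.pow_const 2)) measurable_id
    have hε2int : Integrable (fun ω => ε ω ^ 2) μ := by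
      have h2' : MemLp (fun ω => ε ω ^ 2) 1 μ := by
        have := (by
            haveI : ENNReal.HolderTriple 3 3 (3/2) := ⟨by simpa only [one_div] using aux_ennA.symm⟩
            exact MemLp.smul hεL3 hεL3 : MemLp (ε • ε) (3/2) μ)
        have h32 : MemLp (ε • ε) 1 μ := this.mono_exponent (by
          rw [show (3 : ℝ≥0∞)/2 = 3/2 from rfl]
          exact ENNReal.le_div_iff_mul_le (Or.inl (by norm_num)) (Or.inl (by norm_num)) |>.mpr
            (by norm_num))
        have heq : (ε • ε) = fun ω => ε ω ^ 2 := by funext ω; simp [sq]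
        exact heq ▸ h32
      exact memLp_one_iff_integrable.mp h2'
    have hUint : Integrable (fun ω => Z ω * ε ω ^ 2) μ :=
      Integrable.bdd_mul hε2int hZ.aestronglyMeasurable (Filter.Eventually.of_forall hZbd)
    exact aux_condexp_mul hX (hZ.mul (hε.pow_const 2)) hind'
      (g := fun x => 3 * (α₀ + β₀ * x)) (by fun_prop) hi4 hUint
  have h5 : μ[F5 | MeasurableSpace.comap X inferInstance] =ᵐ[μ] fun ω => (1 : ℝ) * ∫ x, Z x * ε x ^ 3 ∂μ := by
    have hind' : IndepFun (fun ω => Z ω * ε ω ^ 3) X μ :=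
      hPairε.comp (measurable_fst.mul (measurable_snd.pow_const 3)) measurable_id
    have hUint : Integrable (fun ω => Z ω * ε ω ^ 3) μ :=
      Integrable.bdd_mul (aux_cube_integrable hεL3) hZ.aestronglyMeasurable (Filter.Eventually.of_forall hZbd)
    exact aux_condexp_mul hX (hZ.mul (hε.pow_const 3)) hind' measurable_const hi5 hUint
  -- assemble
  have e2 : μ[F1 + F2 | MeasurableSpace.comap X inferInstance] =ᵐ[μ] μ[F1 | MeasurableSpace.comap X inferInstance] + μ[F2 | MeasurableSpace.comap X inferInstance] := condExp_add hi1 hi2 _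
  have e3 : μ[F1 + F2 + F3 | MeasurableSpace.comap X inferInstance] =ᵐ[μ] μ[F1 + F2 | MeasurableSpace.comap X inferInstance] + μ[F3 | MeasurableSpace.comap X inferInstance] :=
    condExp_add (hi1.add hi2) hi3 _
  have e4 : μ[F1 + F2 + F3 + F4 | MeasurableSpace.comap X inferInstance] =ᵐ[μ] μ[F1 + F2 + F3 | MeasurableSpace.comap X inferInstance] + μ[F4 | MeasurableSpace.comap X inferInstance] :=
    condExp_add ((hi1.add hi2).add hi3) hi4 _
  have e5 : μ[F1 + F2 + F3 + F4 + F5 | MeasurableSpace.comap X inferInstance] =ᵐ[μ] μ[F1 + F2 + F3 + F4 | MeasurableSpace.comap X inferInstance] + μ[F5 | MeasurableSpace.comap X inferInstance] :=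
    condExp_add (((hi1.add hi2).add hi3).add hi4) hi5 _
  have hmain : μ[fun ω => (Y ω) ^ 3 | MeasurableSpace.comap X inferInstance] =ᵐ[μ] μ[F1 + F2 + F3 + F4 + F5 | MeasurableSpace.comap X inferInstance] := by
    rw [hdecomp]
  refine hmain.trans (e5.trans ?_)
  have hsum4 := e4.trans (Filter.EventuallyEq.add (e3.trans (Filter.EventuallyEq.add
    (e2.trans (Filter.EventuallyEq.add h1 h2)) h3)) h4)
  refine (Filter.EventuallyEq.add hsum4 h5).trans ?_
  have hπint : ∫ x, Z x ∂μ = π₀ := hZmean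
  filter_upwards with ω
  simp only [Pi.add_apply, hI1, hI3, hI4, hI5, hπint]
  ring
end

section
/- With Y = (1−Z)ε* + Z(α₀ + β₀X + ε) and X having finite fourth moment, cov(X², Y²) = π₀β₀² Var(X²) + 2π₀α₀β₀ cov(X², X). -/
open MeasureTheory ProbabilityTheory

private lemma memL2_mul_of_memL4 {Ω : Type*} [MeasurableSpace Ω] {μ : Measure Ω}
    {f g : Ω → ℝ} (hf : MemLp f 4 μ) (hg : MemLp g 4 μ) :
    MemLp (fun ω => f ω * g ω) 2 μ := by
  have h := hf.smul (𝕜 := ℝ) hg (r := 2)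
    (hpqr := ⟨by rw [← one_div, ← one_div, ENNReal.div_add_div_same, ENNReal.div_eq_div_iff] <;> norm_num⟩)
  have e : (g • f) = fun ω => f ω * g ω := by funext ω; simp [mul_comm]
  rwa [e] at h

private lemma integrable_mul_of_memL2 {Ω : Type*} [MeasurableSpace Ω] {μ : Measure Ω}
    {f g : Ω → ℝ} (hf : MemLp f 2 μ) (hg : MemLp g 2 μ) :
    Integrable (fun ω => f ω * g ω) μ := by
  have h := hf.smul (𝕜 := ℝ) hg (r := 1)
    (hpqr := ⟨by rw [← one_div, ← one_div, ENNReal.div_add_div_same, ENNReal.div_eq_div_iff] <;> norm_num⟩)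
  have e : (g • f) = fun ω => f ω * g ω := by funext ω; simp [mul_comm]
  rw [e] at h
  exact memLp_one_iff_integrable.mp h

/-- In the two-component mixture of regressions model, with `X` having a finite fourth
moment, `cov(X², Y²) = π₀β₀² Var(X²) + 2π₀α₀β₀ cov(X², X)`. -/
theorem cov_Xsq_Ysq
    {Ω : Type*} [MeasurableSpace Ω] (μ : Measure Ω) [IsProbabilityMeasure μ]
    (X Z εstar ε Y : Ω → ℝ) (π₀ α₀ β₀ : ℝ)
    (hX : Measurable X) (hZ : Measurable Z) (hεstar : Measurable εstar) (hε : Measurable ε)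
    (hπ₀ : π₀ ∈ Set.Icc (0 : ℝ) 1)
    (hZ01 : ∀ ω, Z ω = 0 ∨ Z ω = 1)
    (hZmean : ∫ ω, Z ω ∂μ = π₀)
    (hXL4 : MemLp X 4 μ)
    (hεstarL2 : MemLp εstar 2 μ) (hεL2 : MemLp ε 2 μ)
    (hεstar0 : ∫ ω, εstar ω ∂μ = 0) (hε0 : ∫ ω, ε ω ∂μ = 0)
    (hindZ : IndepFun Z (fun ω => (X ω, εstar ω, ε ω)) μ)
    (hindXεstar : IndepFun X εstar μ) (hindXε : IndepFun X ε μ)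
    (hY : ∀ ω, Y ω = (1 - Z ω) * εstar ω + Z ω * (α₀ + β₀ * X ω + ε ω)) :
    (∫ ω, (X ω) ^ 2 * (Y ω) ^ 2 ∂μ) - (∫ ω, (X ω) ^ 2 ∂μ) * (∫ ω, (Y ω) ^ 2 ∂μ)
      = π₀ * β₀ ^ 2 * ((∫ ω, (X ω) ^ 4 ∂μ) - (∫ ω, (X ω) ^ 2 ∂μ) ^ 2)
        + 2 * π₀ * α₀ * β₀
          * ((∫ ω, (X ω) ^ 3 ∂μ) - (∫ ω, (X ω) ^ 2 ∂μ) * (∫ ω, X ω ∂μ)) := by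
  set A : Ω → ℝ := fun ω => α₀ + β₀ * X ω + ε ω with hA
  -- MemLp facts
  have hXL2 : MemLp X 2 μ := hXL4.mono_exponent (by norm_num)
  have hX2L2 : MemLp (fun ω => X ω ^ 2) 2 μ := by
    have h := memL2_mul_of_memL4 hXL4 hXL4
    simpa [pow_two] using h
  -- Integrability of basic quantities
  have iX : Integrable X μ := hXL2.integrable (by norm_num)
  have iε : Integrable ε μ := hεL2.integrable (by norm_num)
  have iεs : Integrable εstar μ := hεstarL2.integrable (by norm_num)
  have iX2 : Integrable (fun ω => X ω ^ 2) μ := hXL2.integrable_sq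
  have iε2 : Integrable (fun ω => ε ω ^ 2) μ := hεL2.integrable_sq
  have iεs2 : Integrable (fun ω => εstar ω ^ 2) μ := hεstarL2.integrable_sq
  have iX3 : Integrable (fun ω => X ω ^ 3) μ := by
    have h := integrable_mul_of_memL2 hX2L2 hXL2
    simpa [pow_succ, pow_two, mul_assoc] using h
  have iX4 : Integrable (fun ω => X ω ^ 4) μ := by
    have h := hX2L2.integrable_sq
    simpa [← pow_mul] using h
  -- independence of powers
  have hiX2ε : IndepFun (fun ω => X ω ^ 2) ε μ :=
    hindXε.comp (measurable_id.pow_const 2) measurable_id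
  have hiX3ε : IndepFun (fun ω => X ω ^ 3) ε μ :=
    hindXε.comp (measurable_id.pow_const 3) measurable_id
  have hiX2ε2 : IndepFun (fun ω => X ω ^ 2) (fun ω => ε ω ^ 2) μ :=
    hindXε.comp (measurable_id.pow_const 2) (measurable_id.pow_const 2)
  have hiX2εs2 : IndepFun (fun ω => X ω ^ 2) (fun ω => εstar ω ^ 2) μ :=
    hindXεstar.comp (measurable_id.pow_const 2) (measurable_id.pow_const 2)
  -- integrable products via independence
  have iXε : Integrable (fun ω => X ω * ε ω) μ := by
    have h := hindXε.integrable_mul iX iε; exact h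
  have iX2ε : Integrable (fun ω => X ω ^ 2 * ε ω) μ := hiX2ε.integrable_mul iX2 iε
  have iX3ε : Integrable (fun ω => X ω ^ 3 * ε ω) μ := hiX3ε.integrable_mul iX3 iε
  have iX2ε2 : Integrable (fun ω => X ω ^ 2 * ε ω ^ 2) μ := hiX2ε2.integrable_mul iX2 iε2
  have iX2εs2 : Integrable (fun ω => X ω ^ 2 * εstar ω ^ 2) μ := hiX2εs2.integrable_mul iX2 iεs2
  -- Xε ∈ L²
  have hXεL2 : MemLp (fun ω => X ω * ε ω) 2 μ := by
    rw [memLp_two_iff_integrable_sq (f := fun ω => X ω * ε ω) ((hX.mul hε).aestronglyMeasurable)]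
    simpa [mul_pow] using iX2ε2
  -- A ∈ L², X·A ∈ L²
  have hAL2 : MemLp A 2 μ := by
    have h : MemLp (fun ω => α₀ + β₀ * X ω + ε ω) 2 μ :=
      ((memLp_const α₀).add (hXL2.const_mul β₀)).add hεL2
    exact h
  have hXAL2 : MemLp (fun ω => X ω * A ω) 2 μ := by
    have h : MemLp (fun ω => α₀ * X ω + β₀ * X ω ^ 2 + X ω * ε ω) 2 μ :=
      ((hXL2.const_mul α₀).add (hX2L2.const_mul β₀)).add hXεL2
    have e : (fun ω => α₀ * X ω + β₀ * X ω ^ 2 + X ω * ε ω) = fun ω => X ω * A ω := by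
      funext ω; simp only [hA]; ring
    rwa [e] at h
  have iA2 : Integrable (fun ω => A ω ^ 2) μ := hAL2.integrable_sq
  have iX2A2 : Integrable (fun ω => X ω ^ 2 * A ω ^ 2) μ := by
    have h := hXAL2.integrable_sq
    simpa [mul_pow] using h
  have iX2d : Integrable (fun ω => X ω ^ 2 * (A ω ^ 2 - εstar ω ^ 2)) μ := by
    have h := iX2A2.sub iX2εs2
    exact h.congr (ae_of_all _ fun ω => by simp [mul_sub])
  have id2 : Integrable (fun ω => A ω ^ 2 - εstar ω ^ 2) μ := iA2.sub iεs2
  -- Z bounded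
  have hZbd : ∃ C, ∀ ω, ‖Z ω‖ ≤ C := by
    refine ⟨1, fun ω => ?_⟩
    rcases hZ01 ω with h | h <;> simp [h]
  have iZX2d : Integrable (fun ω => Z ω * (X ω ^ 2 * (A ω ^ 2 - εstar ω ^ 2))) μ :=
    iX2d.bdd_mul hZ.aestronglyMeasurable (ae_of_all _ hZbd.choose_spec)
  have iZd : Integrable (fun ω => Z ω * (A ω ^ 2 - εstar ω ^ 2)) μ :=
    id2.bdd_mul hZ.aestronglyMeasurable (ae_of_all _ hZbd.choose_spec)
  -- key: E[Z f(X,ε*,ε)] = π₀ E[f(X,ε*,ε)]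
  have hW : Measurable (fun ω => (X ω, εstar ω, ε ω)) := hX.prodMk (hεstar.prodMk hε)
  have hZmul : ∀ f : ℝ × ℝ × ℝ → ℝ, Measurable f →
      ∫ ω, Z ω * f (X ω, εstar ω, ε ω) ∂μ = π₀ * ∫ ω, f (X ω, εstar ω, ε ω) ∂μ := by
    intro f hf
    have h1 : IndepFun Z (fun ω => f (X ω, εstar ω, ε ω)) μ :=
      hindZ.comp measurable_id hf
    have h2 := h1.integral_mul_eq_mul_integral hZ.aestronglyMeasurable
      ((hf.comp hW).aestronglyMeasurable)
    simpa [Pi.mul_apply, hZmean] using h2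
  -- independence integral identities
  have hIXε : ∫ ω, X ω * ε ω ∂μ = 0 := by
    have h := hindXε.integral_mul_eq_mul_integral hX.aestronglyMeasurable hε.aestronglyMeasurable
    simpa [Pi.mul_apply, hε0] using h
  have hIX2ε : ∫ ω, X ω ^ 2 * ε ω ∂μ = 0 := by
    have h := hiX2ε.integral_mul_eq_mul_integral (hX.pow_const 2).aestronglyMeasurable hε.aestronglyMeasurable
    simpa [Pi.mul_apply, hε0] using h
  have hIX3ε : ∫ ω, X ω ^ 3 * ε ω ∂μ = 0 := by
    have h := hiX3ε.integral_mul_eq_mul_integral (hX.pow_const 3).aestronglyMeasurable hε.aestronglyMeasurable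
    simpa [Pi.mul_apply, hε0] using h
  have hIX2ε2 : ∫ ω, X ω ^ 2 * ε ω ^ 2 ∂μ = (∫ ω, X ω ^ 2 ∂μ) * ∫ ω, ε ω ^ 2 ∂μ := by
    have h := hiX2ε2.integral_mul_eq_mul_integral (hX.pow_const 2).aestronglyMeasurable
      (hε.pow_const 2).aestronglyMeasurable
    simpa [Pi.mul_apply] using h
  have hIX2εs2 : ∫ ω, X ω ^ 2 * εstar ω ^ 2 ∂μ = (∫ ω, X ω ^ 2 ∂μ) * ∫ ω, εstar ω ^ 2 ∂μ := by
    have h := hiX2εs2.integral_mul_eq_mul_integral (hX.pow_const 2).aestronglyMeasurable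
      (hεstar.pow_const 2).aestronglyMeasurable
    simpa [Pi.mul_apply] using h
  -- pointwise decomposition of Y²
  have hY2 : ∀ ω, Y ω ^ 2 = εstar ω ^ 2 + Z ω * (A ω ^ 2 - εstar ω ^ 2) := by
    intro ω
    rcases hZ01 ω with h | h <;> rw [hY ω, h] <;> simp [hA] <;> ring
  -- split ∫ Y²
  have hsplitY : ∫ ω, Y ω ^ 2 ∂μ
      = (∫ ω, εstar ω ^ 2 ∂μ) + π₀ * ∫ ω, (A ω ^ 2 - εstar ω ^ 2) ∂μ := by
    rw [show (fun ω => Y ω ^ 2)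
        = fun ω => εstar ω ^ 2 + Z ω * (A ω ^ 2 - εstar ω ^ 2) from funext hY2]
    rw [integral_add iεs2 iZd]
    congr 1
    exact hZmul (fun p => (α₀ + β₀ * p.1 + p.2.2) ^ 2 - p.2.1 ^ 2) (by fun_prop)
  have hsplitXY : ∫ ω, X ω ^ 2 * Y ω ^ 2 ∂μ
      = (∫ ω, X ω ^ 2 * εstar ω ^ 2 ∂μ)
        + π₀ * ∫ ω, X ω ^ 2 * (A ω ^ 2 - εstar ω ^ 2) ∂μ := by
    rw [show (fun ω => X ω ^ 2 * Y ω ^ 2)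
        = fun ω => X ω ^ 2 * εstar ω ^ 2 + Z ω * (X ω ^ 2 * (A ω ^ 2 - εstar ω ^ 2)) from
        funext fun ω => by rw [hY2 ω]; ring]
    rw [integral_add iX2εs2 iZX2d]
    congr 1
    exact hZmul (fun p => p.1 ^ 2 * ((α₀ + β₀ * p.1 + p.2.2) ^ 2 - p.2.1 ^ 2)) (by fun_prop)
  -- compute ∫ A²
  have hA2 : ∫ ω, A ω ^ 2 ∂μ
      = α₀ ^ 2 + β₀ ^ 2 * (∫ ω, X ω ^ 2 ∂μ) + (∫ ω, ε ω ^ 2 ∂μ)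
        + 2 * α₀ * β₀ * (∫ ω, X ω ∂μ) := by
    have e : (fun ω => A ω ^ 2)
        = fun ω => α₀ ^ 2 + (β₀ ^ 2 * X ω ^ 2 + (ε ω ^ 2 + (2 * α₀ * β₀ * X ω
            + (2 * α₀ * ε ω + 2 * β₀ * (X ω * ε ω))))) := by
      funext ω; simp only [hA]; ring
    have t5 : Integrable (fun ω => 2 * α₀ * ε ω + 2 * β₀ * (X ω * ε ω)) μ := by
      exact (iε.const_mul _).add (iXε.const_mul _)
    have t4 : Integrable (fun ω => 2 * α₀ * β₀ * X ω
        + (2 * α₀ * ε ω + 2 * β₀ * (X ω * ε ω))) μ := by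
      exact (iX.const_mul _).add t5
    have t3 : Integrable (fun ω => ε ω ^ 2 + (2 * α₀ * β₀ * X ω
        + (2 * α₀ * ε ω + 2 * β₀ * (X ω * ε ω)))) μ := by
      exact iε2.add t4
    have t2 : Integrable (fun ω => β₀ ^ 2 * X ω ^ 2 + (ε ω ^ 2 + (2 * α₀ * β₀ * X ω
        + (2 * α₀ * ε ω + 2 * β₀ * (X ω * ε ω))))) μ := by
      exact (iX2.const_mul _).add t3
    rw [e, integral_add (integrable_const _) t2,
      integral_add (show Integrable (fun ω => β₀ ^ 2 * X ω ^ 2) μ from iX2.const_mul _) t3,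
      integral_add iε2 t4,
      integral_add (show Integrable (fun ω => 2 * α₀ * β₀ * X ω) μ from iX.const_mul _) t5,
      integral_add (show Integrable (fun ω => 2 * α₀ * ε ω) μ from iε.const_mul _)
        (show Integrable (fun ω => 2 * β₀ * (X ω * ε ω)) μ from iXε.const_mul _)]
    simp only [integral_const_mul, hε0, hIXε, integral_const, measure_univ, probReal_univ, ENNReal.toReal_one,
      smul_eq_mul, one_mul, mul_zero]
    ring
  -- compute ∫ X²A²
  have hX2A2 : ∫ ω, X ω ^ 2 * A ω ^ 2 ∂μ
      = α₀ ^ 2 * (∫ ω, X ω ^ 2 ∂μ) + β₀ ^ 2 * (∫ ω, X ω ^ 4 ∂μ)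
        + (∫ ω, X ω ^ 2 ∂μ) * (∫ ω, ε ω ^ 2 ∂μ)
        + 2 * α₀ * β₀ * (∫ ω, X ω ^ 3 ∂μ) := by
    have e : (fun ω => X ω ^ 2 * A ω ^ 2)
        = fun ω => α₀ ^ 2 * X ω ^ 2 + (β₀ ^ 2 * X ω ^ 4 + (X ω ^ 2 * ε ω ^ 2
            + (2 * α₀ * β₀ * X ω ^ 3
            + (2 * α₀ * (X ω ^ 2 * ε ω) + 2 * β₀ * (X ω ^ 3 * ε ω))))) := by
      funext ω; simp only [hA]; ring
    have t5 : Integrable (fun ω => 2 * α₀ * (X ω ^ 2 * ε ω)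
        + 2 * β₀ * (X ω ^ 3 * ε ω)) μ := by
      exact (iX2ε.const_mul _).add (iX3ε.const_mul _)
    have t4 : Integrable (fun ω => 2 * α₀ * β₀ * X ω ^ 3
        + (2 * α₀ * (X ω ^ 2 * ε ω) + 2 * β₀ * (X ω ^ 3 * ε ω))) μ := by
      exact (iX3.const_mul _).add t5
    have t3 : Integrable (fun ω => X ω ^ 2 * ε ω ^ 2 + (2 * α₀ * β₀ * X ω ^ 3
        + (2 * α₀ * (X ω ^ 2 * ε ω) + 2 * β₀ * (X ω ^ 3 * ε ω)))) μ := by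
      exact iX2ε2.add t4
    have t2 : Integrable (fun ω => β₀ ^ 2 * X ω ^ 4 + (X ω ^ 2 * ε ω ^ 2
        + (2 * α₀ * β₀ * X ω ^ 3
        + (2 * α₀ * (X ω ^ 2 * ε ω) + 2 * β₀ * (X ω ^ 3 * ε ω))))) μ := by
      exact (iX4.const_mul _).add t3
    rw [e, integral_add (show Integrable (fun ω => α₀ ^ 2 * X ω ^ 2) μ from iX2.const_mul _) t2,
      integral_add (show Integrable (fun ω => β₀ ^ 2 * X ω ^ 4) μ from iX4.const_mul _) t3,
      integral_add iX2ε2 t4,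
      integral_add (show Integrable (fun ω => 2 * α₀ * β₀ * X ω ^ 3) μ from iX3.const_mul _) t5,
      integral_add (show Integrable (fun ω => 2 * α₀ * (X ω ^ 2 * ε ω)) μ from iX2ε.const_mul _)
        (show Integrable (fun ω => 2 * β₀ * (X ω ^ 3 * ε ω)) μ from iX3ε.const_mul _)]
    simp only [integral_const_mul, hIX2ε, hIX3ε, hIX2ε2, mul_zero]
    ring
  -- assemble
  have hsub2 : ∫ ω, X ω ^ 2 * (A ω ^ 2 - εstar ω ^ 2) ∂μ
      = (∫ ω, X ω ^ 2 * A ω ^ 2 ∂μ) - ∫ ω, X ω ^ 2 * εstar ω ^ 2 ∂μ := by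
    rw [show (fun ω => X ω ^ 2 * (A ω ^ 2 - εstar ω ^ 2))
        = fun ω => X ω ^ 2 * A ω ^ 2 - X ω ^ 2 * εstar ω ^ 2 from funext fun ω => by ring]
    exact integral_sub iX2A2 iX2εs2
  rw [hsplitXY, hsplitY, hsub2, integral_sub iA2 iεs2, hIX2εs2, hA2, hX2A2]
  ring
end

section
/- Let γ₁ = π₀α₀, γ₂ = π₀β₀, γ₅ = E(X), γ₆ = E(X²), γ₇ = E(X³), γ₈ = E(X⁴), and γ₄ = cov(X², Y²)/Var(X²) (the slope of the L² regression of Y² on X²). Assume Var(X²) = γ₈ − γ₆² > 0 and π₀β₀ ≠ 0 and γ₂ + 2γ₁(γ₇ − γ₅γ₆)/(γ₈ − γ₆²) ≠ 0. Then β₀ = γ₄ / (γ₂ + 2γ₁(γ₇ − γ₅γ₆)/(γ₈ − γ₆²)), π₀ = γ₂/β₀, and α₀ = γ₁/π₀. -/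
open MeasureTheory ProbabilityTheory

lemma integral_add6 {Ω : Type*} [MeasurableSpace Ω] {μ : Measure Ω} {f1 f2 f3 f4 f5 f6 : Ω → ℝ}
    (h1 : Integrable f1 μ) (h2 : Integrable f2 μ) (h3 : Integrable f3 μ)
    (h4 : Integrable f4 μ) (h5 : Integrable f5 μ) (h6 : Integrable f6 μ) :
    ∫ ω, (f1 ω + f2 ω + f3 ω + f4 ω + f5 ω + f6 ω) ∂μ
      = (∫ ω, f1 ω ∂μ) + (∫ ω, f2 ω ∂μ) + (∫ ω, f3 ω ∂μ) + (∫ ω, f4 ω ∂μ)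
        + (∫ ω, f5 ω ∂μ) + (∫ ω, f6 ω ∂μ) := by
  have g2 : Integrable (fun ω => f1 ω + f2 ω) μ := h1.add h2
  have g3 : Integrable (fun ω => f1 ω + f2 ω + f3 ω) μ := g2.add h3
  have g4 : Integrable (fun ω => f1 ω + f2 ω + f3 ω + f4 ω) μ := g3.add h4
  have g5 : Integrable (fun ω => f1 ω + f2 ω + f3 ω + f4 ω + f5 ω) μ := g4.add h5
  rw [integral_add g5 h6, integral_add g4 h5, integral_add g3 h4, integral_add g2 h3,
    integral_add h1 h2]

/-- Method-of-moments identification of `(α₀, β₀, π₀)`: with `γ₁ = π₀α₀`, `γ₂ = π₀β₀`,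
`γ₅,…,γ₈` the first four moments of `X`, and `γ₄ = cov(X²,Y²)/Var(X²)`, if
`Var(X²) > 0`, `π₀β₀ ≠ 0` and `γ₂ + 2γ₁(γ₇ − γ₅γ₆)/(γ₈ − γ₆²) ≠ 0`, then
`β₀ = γ₄/(γ₂ + 2γ₁(γ₇ − γ₅γ₆)/(γ₈ − γ₆²))`, `π₀ = γ₂/β₀` and `α₀ = γ₁/π₀`. -/
theorem method_of_moments_identification
    {Ω : Type*} [MeasurableSpace Ω] (μ : Measure Ω) [IsProbabilityMeasure μ]
    (X Z εstar ε Y : Ω → ℝ) (π₀ α₀ β₀ γ₁ γ₂ γ₄ γ₅ γ₆ γ₇ γ₈ : ℝ)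
    (hX : Measurable X) (hZ : Measurable Z) (hεstar : Measurable εstar) (hε : Measurable ε)
    (hπ₀ : π₀ ∈ Set.Ioc (0 : ℝ) 1) (hβ₀ : β₀ ≠ 0)
    (hZ01 : ∀ ω, Z ω = 0 ∨ Z ω = 1)
    (hZmean : ∫ ω, Z ω ∂μ = π₀)
    (hXL4 : MemLp X 4 μ)
    (hεstarL2 : MemLp εstar 2 μ) (hεL2 : MemLp ε 2 μ)
    (hεstar0 : ∫ ω, εstar ω ∂μ = 0) (hε0 : ∫ ω, ε ω ∂μ = 0)
    (hindZ : IndepFun Z (fun ω => (X ω, εstar ω, ε ω)) μ)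
    (hindXεstar : IndepFun X εstar μ) (hindXε : IndepFun X ε μ)
    (hY : ∀ ω, Y ω = (1 - Z ω) * εstar ω + Z ω * (α₀ + β₀ * X ω + ε ω))
    (hγ1 : γ₁ = π₀ * α₀) (hγ2 : γ₂ = π₀ * β₀)
    (hγ5 : γ₅ = ∫ ω, X ω ∂μ) (hγ6 : γ₆ = ∫ ω, (X ω) ^ 2 ∂μ)
    (hγ7 : γ₇ = ∫ ω, (X ω) ^ 3 ∂μ) (hγ8 : γ₈ = ∫ ω, (X ω) ^ 4 ∂μ)
    (hvar : 0 < γ₈ - γ₆ ^ 2)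
    (hγ4 : γ₄ = ((∫ ω, (X ω) ^ 2 * (Y ω) ^ 2 ∂μ)
        - (∫ ω, (X ω) ^ 2 ∂μ) * (∫ ω, (Y ω) ^ 2 ∂μ)) / (γ₈ - γ₆ ^ 2))
    (hden : γ₂ + 2 * γ₁ * (γ₇ - γ₅ * γ₆) / (γ₈ - γ₆ ^ 2) ≠ 0) :
    β₀ = γ₄ / (γ₂ + 2 * γ₁ * (γ₇ - γ₅ * γ₆) / (γ₈ - γ₆ ^ 2)) ∧
      π₀ = γ₂ / β₀ ∧ α₀ = γ₁ / π₀ := by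
  obtain ⟨hπpos, -⟩ := hπ₀
  have hπne : π₀ ≠ 0 := ne_of_gt hπpos
  have hVne : γ₈ - γ₆ ^ 2 ≠ 0 := ne_of_gt hvar
  -- integrability of powers of X
  have hXsqL2 : MemLp (fun ω => X ω ^ 2) 2 μ := by
    haveI : ENNReal.HolderTriple 4 4 2 := ⟨by
      rw [← two_mul, show (4 : ENNReal) = 2 * 2 by norm_num,
        ENNReal.mul_inv (by norm_num) (by norm_num), ← mul_assoc,
        ENNReal.mul_inv_cancel (by norm_num) (by norm_num), one_mul]⟩
    have h := hXL4.smul (φ := X) (𝕜 := ℝ) hXL4 (p := 4) (q := 4) (r := 2)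
    have e : (fun ω => X ω ^ 2) = X • X := by
      funext ω; simp [Pi.smul_apply, smul_eq_mul, pow_two]
    rw [e]; exact h
  have hX4 : Integrable (fun ω => X ω ^ 4) μ := by
    simpa [← pow_mul] using hXsqL2.integrable_sq
  have hX2 : Integrable (fun ω => X ω ^ 2) μ := hXsqL2.integrable one_le_two
  have hX1 : Integrable X μ := hXL4.integrable (by norm_num)
  have hX3 : Integrable (fun ω => X ω ^ 3) μ := by
    refine (hX4.add (integrable_const 1)).mono' (hX.pow_const 3).aestronglyMeasurable ?_
    filter_upwards with ω
    have h1 : ‖X ω ^ 3‖ = |X ω| ^ 3 := by rw [Real.norm_eq_abs, abs_pow]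
    have h2 : |X ω| ^ 4 = X ω ^ 4 := by
      rw [← abs_pow, abs_of_nonneg (by positivity)]
    rw [h1]
    simp only [Pi.add_apply]
    nlinarith [abs_nonneg (X ω), sq_nonneg (|X ω| ^ 2 - |X ω|), sq_nonneg (|X ω| - 1), h2]
  -- integrability of errors
  have hε1 : Integrable ε μ := hεL2.integrable one_le_two
  have hεs1 : Integrable εstar μ := hεstarL2.integrable one_le_two
  have hε2 : Integrable (fun ω => ε ω ^ 2) μ := hεL2.integrable_sq
  have hεs2 : Integrable (fun ω => εstar ω ^ 2) μ := hεstarL2.integrable_sq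
  -- independence compositions
  have hiX2ε2 : IndepFun (fun ω => X ω ^ 2) (fun ω => ε ω ^ 2) μ :=
    hindXε.comp (measurable_id.pow_const 2) (measurable_id.pow_const 2)
  have hiX2εs2 : IndepFun (fun ω => X ω ^ 2) (fun ω => εstar ω ^ 2) μ :=
    hindXεstar.comp (measurable_id.pow_const 2) (measurable_id.pow_const 2)
  have hiX2ε : IndepFun (fun ω => X ω ^ 2) ε μ :=
    hindXε.comp (measurable_id.pow_const 2) measurable_id
  have hiX3ε : IndepFun (fun ω => X ω ^ 3) ε μ :=
    hindXε.comp (measurable_id.pow_const 3) measurable_id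
  -- product integrals with the errors
  have hIXε : ∫ ω, X ω * ε ω ∂μ = 0 := by
    rw [hindXε.integral_fun_mul_eq_mul_integral hX.aestronglyMeasurable hε.aestronglyMeasurable, hε0, mul_zero]
  have hIX2ε : ∫ ω, X ω ^ 2 * ε ω ∂μ = 0 := by
    rw [hiX2ε.integral_fun_mul_eq_mul_integral (hX.pow_const 2).aestronglyMeasurable hε.aestronglyMeasurable,
      hε0, mul_zero]
  have hIX3ε : ∫ ω, X ω ^ 3 * ε ω ∂μ = 0 := by
    rw [hiX3ε.integral_fun_mul_eq_mul_integral (hX.pow_const 3).aestronglyMeasurable hε.aestronglyMeasurable,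
      hε0, mul_zero]
  have hIX2ε2 : ∫ ω, X ω ^ 2 * ε ω ^ 2 ∂μ = γ₆ * ∫ ω, ε ω ^ 2 ∂μ := by
    rw [hiX2ε2.integral_fun_mul_eq_mul_integral (hX.pow_const 2).aestronglyMeasurable
      (hε.pow_const 2).aestronglyMeasurable, ← hγ6]
  have hIX2εs2 : ∫ ω, X ω ^ 2 * εstar ω ^ 2 ∂μ = γ₆ * ∫ ω, εstar ω ^ 2 ∂μ := by
    rw [hiX2εs2.integral_fun_mul_eq_mul_integral (hX.pow_const 2).aestronglyMeasurable
      (hεstar.pow_const 2).aestronglyMeasurable, ← hγ6]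
  -- integrable products
  have hXε_int : Integrable (fun ω => X ω * ε ω) μ := hindXε.integrable_mul hX1 hε1
  have hX2ε_int : Integrable (fun ω => X ω ^ 2 * ε ω) μ := hiX2ε.integrable_mul hX2 hε1
  have hX3ε_int : Integrable (fun ω => X ω ^ 3 * ε ω) μ := hiX3ε.integrable_mul hX3 hε1
  have hX2ε2_int : Integrable (fun ω => X ω ^ 2 * ε ω ^ 2) μ := hiX2ε2.integrable_mul hX2 hε2
  have hX2εs2_int : Integrable (fun ω => X ω ^ 2 * εstar ω ^ 2) μ :=
    hiX2εs2.integrable_mul hX2 hεs2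
  -- the "treated" square and its moments
  have hT2eq : (fun ω => (α₀ + β₀ * X ω + ε ω) ^ 2)
      = fun ω => (α₀ ^ 2 + (2 * α₀ * β₀) * X ω + β₀ ^ 2 * X ω ^ 2 + ε ω ^ 2
          + (2 * α₀) * ε ω + (2 * β₀) * (X ω * ε ω)) := by
    funext ω; ring
  have hT2_int : Integrable (fun ω => (α₀ + β₀ * X ω + ε ω) ^ 2) μ := by
    rw [hT2eq]
    exact (((((integrable_const _).add (hX1.const_mul _)).add (hX2.const_mul _)).add hε2).add
      (hε1.const_mul _)).add (hXε_int.const_mul _)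
  have hIT2 : ∫ ω, (α₀ + β₀ * X ω + ε ω) ^ 2 ∂μ
      = α₀ ^ 2 + 2 * α₀ * β₀ * γ₅ + β₀ ^ 2 * γ₆ + ∫ ω, ε ω ^ 2 ∂μ := by
    rw [hT2eq, integral_add6 (integrable_const _) (hX1.const_mul _) (hX2.const_mul _) hε2
      (hε1.const_mul _) (hXε_int.const_mul _),
      integral_const_mul _ _, integral_const_mul _ _, integral_const_mul _ _, integral_const_mul _ _,
      hIXε, hε0, ← hγ5, ← hγ6]
    simp
  have hM2eq : (fun ω => X ω ^ 2 * (α₀ + β₀ * X ω + ε ω) ^ 2)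
      = fun ω => (α₀ ^ 2 * X ω ^ 2 + (2 * α₀ * β₀) * X ω ^ 3 + β₀ ^ 2 * X ω ^ 4
          + X ω ^ 2 * ε ω ^ 2 + (2 * α₀) * (X ω ^ 2 * ε ω) + (2 * β₀) * (X ω ^ 3 * ε ω)) := by
    funext ω; ring
  have hM2_int : Integrable (fun ω => X ω ^ 2 * (α₀ + β₀ * X ω + ε ω) ^ 2) μ := by
    rw [hM2eq]
    exact ((((((hX2.const_mul _)).add (hX3.const_mul _)).add (hX4.const_mul _)).add
      hX2ε2_int).add (hX2ε_int.const_mul _)).add (hX3ε_int.const_mul _)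
  have hIM2 : ∫ ω, X ω ^ 2 * (α₀ + β₀ * X ω + ε ω) ^ 2 ∂μ
      = α₀ ^ 2 * γ₆ + 2 * α₀ * β₀ * γ₇ + β₀ ^ 2 * γ₈ + γ₆ * ∫ ω, ε ω ^ 2 ∂μ := by
    rw [hM2eq, integral_add6 (hX2.const_mul _) (hX3.const_mul _) (hX4.const_mul _) hX2ε2_int
      (hX2ε_int.const_mul _) (hX3ε_int.const_mul _),
      integral_const_mul _ _, integral_const_mul _ _, integral_const_mul _ _, integral_const_mul _ _,
      integral_const_mul _ _, hIX2ε, hIX3ε, hIX2ε2, ← hγ6, ← hγ7, ← hγ8]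
    ring
  -- splitting integrals against Z
  have htriple : Measurable (fun ω => (X ω, εstar ω, ε ω)) :=
    hX.prodMk (hεstar.prodMk hε)
  have hZsplit : ∀ g : ℝ × ℝ × ℝ → ℝ, Measurable g →
      ∫ ω, Z ω * g (X ω, εstar ω, ε ω) ∂μ = π₀ * ∫ ω, g (X ω, εstar ω, ε ω) ∂μ := by
    intro g hg
    have h := (hindZ.comp measurable_id hg).integral_fun_mul_eq_mul_integral hZ.aestronglyMeasurable
      (hg.comp htriple).aestronglyMeasurable
    simpa [Function.comp, hZmean] using h
  have hg1 : Measurable (fun p : ℝ × ℝ × ℝ => (α₀ + β₀ * p.1 + p.2.2) ^ 2 - p.2.1 ^ 2) := by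
    fun_prop
  have hsp1 : ∫ ω, Z ω * ((α₀ + β₀ * X ω + ε ω) ^ 2 - εstar ω ^ 2) ∂μ
      = π₀ * ∫ ω, ((α₀ + β₀ * X ω + ε ω) ^ 2 - εstar ω ^ 2) ∂μ := hZsplit _ hg1
  have hg2 : Measurable (fun p : ℝ × ℝ × ℝ =>
      p.1 ^ 2 * (α₀ + β₀ * p.1 + p.2.2) ^ 2 - p.1 ^ 2 * p.2.1 ^ 2) := by fun_prop
  have hsp2 : ∫ ω, Z ω * (X ω ^ 2 * (α₀ + β₀ * X ω + ε ω) ^ 2 - X ω ^ 2 * εstar ω ^ 2) ∂μ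
      = π₀ * ∫ ω, (X ω ^ 2 * (α₀ + β₀ * X ω + ε ω) ^ 2 - X ω ^ 2 * εstar ω ^ 2) ∂μ :=
    hZsplit _ hg2
  have hZbd : ∀ ω, ‖Z ω‖ ≤ 1 := by
    intro ω; rcases hZ01 ω with h | h <;> simp [h]
  -- second moment of Y
  have hYsq : ∀ ω, Y ω ^ 2
      = εstar ω ^ 2 + Z ω * ((α₀ + β₀ * X ω + ε ω) ^ 2 - εstar ω ^ 2) := by
    intro ω; rcases hZ01 ω with h | h <;> rw [hY ω, h] <;> ring
  have hZ1_int : Integrable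
      (fun ω => Z ω * ((α₀ + β₀ * X ω + ε ω) ^ 2 - εstar ω ^ 2)) μ :=
    (hT2_int.sub hεs2).bdd_mul (c := 1) hZ.aestronglyMeasurable (Filter.Eventually.of_forall hZbd)
  have hEY2 : ∫ ω, Y ω ^ 2 ∂μ = (∫ ω, εstar ω ^ 2 ∂μ)
      + π₀ * ((∫ ω, (α₀ + β₀ * X ω + ε ω) ^ 2 ∂μ) - ∫ ω, εstar ω ^ 2 ∂μ) := by
    simp only [hYsq]
    rw [integral_add hεs2 hZ1_int, hsp1, integral_sub hT2_int hεs2]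
  -- mixed fourth moment
  have hXYsq : ∀ ω, X ω ^ 2 * Y ω ^ 2
      = X ω ^ 2 * εstar ω ^ 2
        + Z ω * (X ω ^ 2 * (α₀ + β₀ * X ω + ε ω) ^ 2 - X ω ^ 2 * εstar ω ^ 2) := by
    intro ω; rcases hZ01 ω with h | h <;> rw [hY ω, h] <;> ring
  have hZ2_int : Integrable (fun ω =>
      Z ω * (X ω ^ 2 * (α₀ + β₀ * X ω + ε ω) ^ 2 - X ω ^ 2 * εstar ω ^ 2)) μ :=
    (hM2_int.sub hX2εs2_int).bdd_mul (c := 1) hZ.aestronglyMeasurable (Filter.Eventually.of_forall hZbd)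
  have hEX2Y2 : ∫ ω, X ω ^ 2 * Y ω ^ 2 ∂μ = γ₆ * (∫ ω, εstar ω ^ 2 ∂μ)
      + π₀ * ((∫ ω, X ω ^ 2 * (α₀ + β₀ * X ω + ε ω) ^ 2 ∂μ)
        - γ₆ * ∫ ω, εstar ω ^ 2 ∂μ) := by
    simp only [hXYsq]
    rw [integral_add hX2εs2_int hZ2_int, hsp2, integral_sub hM2_int hX2εs2_int, hIX2εs2]
  -- the key identity
  have hγ4' : γ₄ = β₀ * (γ₂ + 2 * γ₁ * (γ₇ - γ₅ * γ₆) / (γ₈ - γ₆ ^ 2)) := by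
    rw [hγ4, hEX2Y2, hEY2, hIT2, hIM2, ← hγ6, hγ1, hγ2]
    field_simp
    ring
  refine ⟨?_, ?_, ?_⟩
  · rw [hγ4', mul_div_assoc, div_self hden, mul_one]
  · rw [hγ2, mul_div_assoc, div_self hβ₀, mul_one]
  · rw [hγ1, mul_comm, mul_div_assoc, div_self hπne, mul_one]
end

section
/- Let κ be a probability density on ℝ with ∫|u|κ(u)du < ∞, and suppose for each x the conditional density f_{Y|X}(·|x) is differentiable with derivative bounded uniformly by M'. Then for all t ∈ ℝ, h > 0, (α,β), (α₀,β₀) ∈ ℝ², and g(t) := ∫ f_{Y|X}(t + α₀ + β₀x | x) dF_X(x): | (1/h) ∫∫ κ((t − y + α + βx)/h) f_{Y|X}(y|x) dy dF_X(x) − g(t) | ≤ M' ( |α−α₀| + E|X|·|β−β₀| + h∫|u|κ(u)du ). -/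
open MeasureTheory

lemma lip_density_bound (g : ℝ → ℝ) (M' : ℝ) (hM : 0 < M')
    (hg0 : ∀ y, 0 ≤ g y)
    (hlip : ∀ a b, |g a - g b| ≤ M' * |a - b|)
    (hint : Integrable g volume) (hone : ∫ y, g y = 1) :
    ∀ y, g y ≤ Real.sqrt (2 * M') := by
  intro y
  rcases le_or_gt (g y) 0 with hB | hB
  · exact hB.trans (Real.sqrt_nonneg _)
  · set B := g y with hBdef
    have hBM : 0 < B / M' := div_pos hB hM
    set a := y - B / M' with ha
    have hay : a ≤ y := by simp [ha]; positivity
    have hpt : ∀ z ∈ Set.Icc a y, B - M' * (y - z) ≤ g z := by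
      intro z hz
      have h1 : |g y - g z| ≤ M' * |y - z| := hlip y z
      have h2 : |y - z| = y - z := abs_of_nonneg (by linarith [hz.2])
      have := (abs_le.mp h1).2
      rw [h2] at this
      linarith
    have hii : IntervalIntegrable g volume a y := hint.intervalIntegrable
    have hci : IntervalIntegrable (fun z => B - M' * (y - z)) volume a y :=
      (Continuous.intervalIntegrable (by continuity) a y)
    have hle1 : ∫ z in a..y, (B - M' * (y - z)) ≤ ∫ z in a..y, g z :=
      intervalIntegral.integral_mono_on hay hci hii hpt
    have hcomp : ∫ z in a..y, (B - M' * (y - z)) = B ^ 2 / (2 * M') := by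
      have : (fun z => B - M' * (y - z)) = fun z => M' * z + (B - M' * y) := by
        funext z; ring
      rw [this, intervalIntegral.integral_add ((intervalIntegral.intervalIntegrable_id.const_mul M'))
        (intervalIntegrable_const), intervalIntegral.integral_const_mul, integral_id,
        intervalIntegral.integral_const]
      have hM0 : M' ≠ 0 := hM.ne'
      field_simp [ha]
      rw [ha]; field_simp
      linear_combination (2 * B ^ 2 - 2 * y * B * M') * mul_inv_cancel₀ hM0
    have hle2 : ∫ z in a..y, g z ≤ 1 := by
      rw [intervalIntegral.integral_of_le hay]
      rw [← hone]
      exact setIntegral_le_integral hint (Filter.Eventually.of_forall hg0)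
    have hB2 : B ^ 2 ≤ 2 * M' := by
      have h2M : (0:ℝ) < 2 * M' := by positivity
      have := hcomp ▸ hle1.trans hle2
      calc B ^ 2 = B ^ 2 / (2 * M') * (2 * M') := by field_simp
        _ ≤ 1 * (2 * M') := by exact mul_le_mul_of_nonneg_right this h2M.le
        _ = 2 * M' := one_mul _
    exact (Real.le_sqrt hB.le (by positivity)).mpr hB2

/-- Uniform bias bound for the kernel estimator of the density: if `κ` is a probability
density with finite first absolute moment and the conditional densities `f(·|x)` are
differentiable with derivative uniformly bounded by `M'`, then for all `t`, `h > 0`,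
`(α,β)`, `(α₀,β₀)`, with `g(t) = ∫ f(t + α₀ + β₀x | x) dF_X(x)`,
`|(1/h)∫∫ κ((t − y + α + βx)/h) f(y|x) dy dF_X(x) − g(t)|
  ≤ M'(|α−α₀| + E|X|·|β−β₀| + h∫|u|κ(u)du)`. -/
theorem kernel_smoothing_bias_bound
    (κ : ℝ → ℝ) (hκmeas : Measurable κ) (hκ0 : ∀ u, 0 ≤ κ u)
    (hκint : Integrable κ volume) (hκ1 : ∫ u, κ u = 1)
    (hκabs : Integrable (fun u => |u| * κ u) volume)
    (f : ℝ → ℝ → ℝ) (M' : ℝ) (hM' : 0 < M')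
    (hfmeas : Measurable (fun p : ℝ × ℝ => f p.1 p.2))
    (hfdiff : ∀ x, Differentiable ℝ (fun y => f y x))
    (hfd : ∀ x y, |deriv (fun y => f y x) y| ≤ M')
    (hf0 : ∀ y x, 0 ≤ f y x)
    (hfint : ∀ x, Integrable (fun y => f y x) volume)
    (hfdens : ∀ x, ∫ y, f y x = 1)
    (ν : Measure ℝ) [IsProbabilityMeasure ν]
    (hX1 : Integrable (fun x => |x|) ν) :
    ∀ (t h α β α₀ β₀ : ℝ), 0 < h →
      |(1 / h) * ∫ x, (∫ y, κ ((t - y + α + β * x) / h) * f y x) ∂ν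
          - ∫ x, f (t + α₀ + β₀ * x) x ∂ν|
        ≤ M' * (|α - α₀| + (∫ x, |x| ∂ν) * |β - β₀| + h * ∫ u, |u| * κ u) := by
  -- Lipschitz property of f in its first variable
  have hLip : ∀ x a b, |f a x - f b x| ≤ M' * |a - b| := by
    intro x a b
    have hC : ∀ y, ‖deriv (fun y => f y x) y‖₊ ≤ M'.toNNReal := by
      intro y
      rw [← NNReal.coe_le_coe, coe_nnnorm, Real.coe_toNNReal _ hM'.le, Real.norm_eq_abs]
      exact hfd x y
    have hL := lipschitzWith_of_nnnorm_deriv_le (hfdiff x) hC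
    have := hL.dist_le_mul a b
    rwa [Real.dist_eq, Real.dist_eq, Real.coe_toNNReal _ hM'.le] at this
  -- Uniform bound on f
  set C := Real.sqrt (2 * M') with hCdef
  have hBd : ∀ x y, f y x ≤ C := fun x y =>
    lip_density_bound (fun y => f y x) M' hM' (fun y => hf0 y x)
      (fun a b => hLip x a b) (hfint x) (hfdens x) y
  intro t h α β α₀ β₀ hh
  set I := ∫ u, |u| * κ u with hIdef
  set A : ℝ → ℝ := fun x => ∫ u, κ u * f (t + α + β * x - h * u) x with hAdef
  have hcont : ∀ x, Continuous (fun y => f y x) := fun x => (hfdiff x).continuous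
  -- inner substitution
  have hinner : ∀ x, (∫ y, κ ((t - y + α + β * x) / h) * f y x) = h * A x := by
    intro x
    have step1 : (∫ y, κ ((t - y + α + β * x) / h) * f y x)
        = ∫ y, (fun z => κ (h⁻¹ * z) * f (t + α + β * x - z) x) ((t + α + β * x) - y) := by
      congr 1; funext y
      have h1 : (t - y + α + β * x) / h = h⁻¹ * ((t + α + β * x) - y) := by ring
      have h2 : t + α + β * x - ((t + α + β * x) - y) = y := by ring
      simp only [h1, h2]
    rw [step1, integral_sub_left_eq_self (fun z => κ (h⁻¹ * z) * f (t + α + β * x - z) x)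
      volume (t + α + β * x)]
    calc (∫ z, κ (h⁻¹ * z) * f (t + α + β * x - z) x)
        = ∫ z, (fun u => κ u * f (t + α + β * x - h * u) x) (h⁻¹ * z) := by
          congr 1; funext z
          simp only [mul_inv_cancel_left₀ hh.ne']
      _ = |h⁻¹⁻¹| • ∫ u, κ u * f (t + α + β * x - h * u) x :=
          Measure.integral_comp_mul_left (fun u => κ u * f (t + α + β * x - h * u) x) h⁻¹
      _ = h * A x := by rw [inv_inv, abs_of_pos hh, smul_eq_mul, hAdef]
  -- integrability of inner integrand
  have hHmeas : ∀ x, Measurable (fun u => κ u * f (t + α + β * x - h * u) x) := by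
    intro x
    exact hκmeas.mul (((hcont x).comp (by continuity)).measurable)
  have hHle : ∀ x u, |κ u * f (t + α + β * x - h * u) x| ≤ C * κ u := by
    intro x u
    rw [abs_of_nonneg (mul_nonneg (hκ0 u) (hf0 _ x)), mul_comm]
    exact mul_le_mul_of_nonneg_right (hBd x _) (hκ0 u)
  have hHint : ∀ x, Integrable (fun u => κ u * f (t + α + β * x - h * u) x) volume := by
    intro x
    exact (hκint.const_mul C).mono' ((hHmeas x).aestronglyMeasurable)
      (Filter.Eventually.of_forall fun u => by rw [Real.norm_eq_abs]; exact hHle x u)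
  -- key pointwise bound
  have hkey : ∀ x, |A x - f (t + α₀ + β₀ * x) x|
      ≤ M' * |α - α₀| + (M' * |β - β₀|) * |x| + M' * (h * I) := by
    intro x
    have hBint : Integrable (fun u => κ u * f (t + α₀ + β₀ * x) x) volume :=
      hκint.mul_const _
    have hsub : A x - f (t + α₀ + β₀ * x) x
        = ∫ u, (κ u * f (t + α + β * x - h * u) x - κ u * f (t + α₀ + β₀ * x) x) := by
      rw [integral_sub (hHint x) hBint, hAdef]
      simp only []
      congr 1
      rw [integral_mul_const, hκ1, one_mul]
    have hptw : ∀ u, |κ u * f (t + α + β * x - h * u) x - κ u * f (t + α₀ + β₀ * x) x|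
        ≤ (M' * (|α - α₀| + |β - β₀| * |x|)) * κ u + (M' * h) * (|u| * κ u) := by
      intro u
      rw [← mul_sub, abs_mul, abs_of_nonneg (hκ0 u)]
      have h1 : |f (t + α + β * x - h * u) x - f (t + α₀ + β₀ * x) x|
          ≤ M' * |(α - α₀) + (β - β₀) * x - h * u| := by
        have := hLip x (t + α + β * x - h * u) (t + α₀ + β₀ * x)
        have he : t + α + β * x - h * u - (t + α₀ + β₀ * x)
            = (α - α₀) + (β - β₀) * x - h * u := by ring
        rwa [he] at this
      have h2 : |(α - α₀) + (β - β₀) * x - h * u|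
          ≤ |α - α₀| + |β - β₀| * |x| + h * |u| := by
        have e1 : (α - α₀) + (β - β₀) * x - h * u
            = (α - α₀) + ((β - β₀) * x + (-(h * u))) := by ring
        rw [e1]
        refine (abs_add_le _ _).trans ?_
        rw [add_assoc]
        refine add_le_add le_rfl ((abs_add_le _ _).trans ?_)
        rw [abs_mul, abs_neg, abs_mul, abs_of_pos hh]
      calc κ u * |f (t + α + β * x - h * u) x - f (t + α₀ + β₀ * x) x|
          ≤ κ u * (M' * (|α - α₀| + |β - β₀| * |x| + h * |u|)) :=
            mul_le_mul_of_nonneg_left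
              (h1.trans (mul_le_mul_of_nonneg_left h2 hM'.le)) (hκ0 u)
        _ = (M' * (|α - α₀| + |β - β₀| * |x|)) * κ u + (M' * h) * (|u| * κ u) := by ring
    rw [hsub]
    have hRint : Integrable
        (fun u => (M' * (|α - α₀| + |β - β₀| * |x|)) * κ u + (M' * h) * (|u| * κ u)) volume :=
      (hκint.const_mul _).add (hκabs.const_mul _)
    have hnb := norm_integral_le_of_norm_le hRint
      (Filter.Eventually.of_forall fun u => by rw [Real.norm_eq_abs]; exact hptw u)
    rw [Real.norm_eq_abs] at hnb
    refine hnb.trans ?_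
    rw [integral_add (hκint.const_mul _) (hκabs.const_mul _), integral_const_mul,
      integral_const_mul, hκ1]
    apply le_of_eq
    rw [← hIdef]
    ring
  -- measurability and integrability over ν
  have hm1 : Measurable (fun x : ℝ => (t + α₀ + β₀ * x, x)) :=
    (measurable_const.add (measurable_const.mul measurable_id)).prodMk measurable_id
  have hBν : Integrable (fun x => f (t + α₀ + β₀ * x) x) ν := by
    refine Integrable.mono' (integrable_const C) (hfmeas.comp hm1).aestronglyMeasurable ?_
    exact Filter.Eventually.of_forall fun x => by
      rw [Real.norm_eq_abs, abs_of_nonneg (hf0 _ _)]; exact hBd x _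
  have hFmeas : Measurable (fun p : ℝ × ℝ => κ p.2 * f (t + α + β * p.1 - h * p.2) p.1) := by
    have hm2 : Measurable (fun p : ℝ × ℝ => (t + α + β * p.1 - h * p.2, p.1)) :=
      ((measurable_const.add (measurable_const.mul measurable_fst)).sub
        (measurable_const.mul measurable_snd)).prodMk measurable_fst
    have hm3 : Measurable (fun p : ℝ × ℝ => f (t + α + β * p.1 - h * p.2) p.1) :=
      hfmeas.comp hm2
    exact (hκmeas.comp measurable_snd).mul hm3
  have hAsm : StronglyMeasurable A := by
    rw [hAdef]
    exact hFmeas.stronglyMeasurable.integral_prod_right'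
  have hA0 : ∀ x, 0 ≤ A x := fun x =>
    integral_nonneg fun u => mul_nonneg (hκ0 u) (hf0 _ _)
  have hAC : ∀ x, A x ≤ C := by
    intro x
    calc A x ≤ ∫ u, C * κ u := integral_mono (hHint x) (hκint.const_mul C)
          (fun u => (le_abs_self _).trans (hHle x u))
      _ = C := by rw [integral_const_mul, hκ1, mul_one]
  have hAν : Integrable A ν :=
    Integrable.mono' (integrable_const C) hAsm.aestronglyMeasurable
      (Filter.Eventually.of_forall fun x => by
        rw [Real.norm_eq_abs, abs_of_nonneg (hA0 x)]; exact hAC x)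
  have hDν : Integrable (fun x => M' * |α - α₀| + (M' * |β - β₀|) * |x| + M' * (h * I)) ν :=
    ((integrable_const _).add (hX1.const_mul _)).add (integrable_const _)
  have hmain : |∫ x, A x ∂ν - ∫ x, f (t + α₀ + β₀ * x) x ∂ν|
      ≤ ∫ x, (M' * |α - α₀| + (M' * |β - β₀|) * |x| + M' * (h * I)) ∂ν := by
    rw [← integral_sub hAν hBν]
    have hnb := norm_integral_le_of_norm_le hDν
      (Filter.Eventually.of_forall fun x => by rw [Real.norm_eq_abs]; exact hkey x)
    rwa [Real.norm_eq_abs] at hnb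
  have hDval : ∫ x, (M' * |α - α₀| + (M' * |β - β₀|) * |x| + M' * (h * I)) ∂ν
      = M' * (|α - α₀| + (∫ x, |x| ∂ν) * |β - β₀| + h * I) := by
    have h1 : Integrable (fun x => M' * |α - α₀| + (M' * |β - β₀|) * |x|) ν :=
      (integrable_const _).add (hX1.const_mul _)
    rw [integral_add h1 (integrable_const _),
      integral_add (integrable_const (M' * |α - α₀|)) (hX1.const_mul _),
      integral_const, integral_const, integral_const_mul]
    simp only [probReal_univ, measure_univ, ENNReal.toReal_one, one_smul, smul_eq_mul]
    ring
  have hLHS : (1 / h) * ∫ x, (∫ y, κ ((t - y + α + β * x) / h) * f y x) ∂ν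
      = ∫ x, A x ∂ν := by
    have he : ∫ x, (∫ y, κ ((t - y + α + β * x) / h) * f y x) ∂ν = ∫ x, h * A x ∂ν :=
      integral_congr_ae (Filter.Eventually.of_forall hinner)
    rw [he, integral_const_mul, ← mul_assoc, one_div, inv_mul_cancel₀ hh.ne', one_mul]
  rw [hLHS]
  exact hmain.trans (le_of_eq hDval)
end
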